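/- Consequently, the set of identities {associativity, (xy)‾x = x(yx)‾, x̄²x = x̄, x²x̄ = x̿, (x̄x)‾ = x̄x, and (x^q)‾ = x̄^q for all primes q ≠ p} does not imply the identity (x^p)‾ = x̄^p; hence no finite subset of the identity basis of epigroups axiomatizes the equational theory of epigroups. -/
import Mathlib


/-- `mpow mul x n` is the `(n+1)`-st power of `x` with respect to the binary
operation `mul`; thus `mpow mul x (n - 1) = xⁿ` for `n ≥ 1`. -/
def mpow {M : Type*} (mul : M → M → M) (x : M) : ℕ → M
  | 0 => x
  | n + 1 => mul (mpow mul x n) x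

def Wmul (p : ℕ) : Option (ZMod p) → Option (ZMod p) → Option (ZMod p)
  | some a, some b => some (a + b)
  | _, _ => none

def Wbar (p : ℕ) : Option (ZMod p) → Option (ZMod p)
  | some a => if a = 0 then some 0 else none
  | none => none

lemma mpow_none (p : ℕ) (n : ℕ) : mpow (Wmul p) none n = none := by
  induction n with
  | zero => rfl
  | succ n ih => simp [mpow, ih, Wmul]

lemma mpow_some (p : ℕ) (a : ZMod p) (n : ℕ) :
    mpow (Wmul p) (some a) n = some (((n : ZMod p) + 1) * a) := by
  induction n with
  | zero => simp [mpow]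
  | succ n ih =>
    simp only [mpow, ih, Wmul]
    congr 1
    push_cast
    ring

/-- For every prime `p`, the identities (associativity, `(xy)‾x = x(yx)‾`,
`x̄²x = x̄`, `x²x̄ = bar (bar x)`, `(x̄x)‾ = x̄x`, and `(x^q)‾ = x̄^q` for all
primes `q ≠ p`) do not imply the identity `(x^p)‾ = x̄^p`: there is a unary
semigroup satisfying all of the former but failing the latter. Hence no finite
subset of the identity basis of epigroups axiomatizes the equational theory of
epigroups. -/
theorem stmt17 (p : ℕ) (hp : p.Prime) :
    ∃ (M : Type) (mul : M → M → M) (bar : M → M),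
      (∀ a b c : M, mul (mul a b) c = mul a (mul b c)) ∧
      (∀ x y : M, mul (bar (mul x y)) x = mul x (bar (mul y x))) ∧
      (∀ x : M, mul (mul (bar x) (bar x)) x = bar x) ∧
      (∀ x : M, mul (mul x x) (bar x) = bar (bar x)) ∧
      (∀ x : M, bar (mul (bar x) x) = mul (bar x) x) ∧
      (∀ q : ℕ, q.Prime → q ≠ p →
        ∀ x : M, bar (mpow mul x (q - 1)) = mpow mul (bar x) (q - 1)) ∧
      ¬ (∀ x : M, bar (mpow mul x (p - 1)) = mpow mul (bar x) (p - 1)) := by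
  haveI : Fact p.Prime := ⟨hp⟩
  refine ⟨Option (ZMod p), Wmul p, Wbar p, ?_, ?_, ?_, ?_, ?_, ?_, ?_⟩
  · rintro (_ | a) (_ | b) (_ | c) <;> simp [Wmul, add_assoc]
  · rintro (_ | a) (_ | b) <;> simp [Wmul, Wbar]
    rw [add_comm b a]
    split_ifs with h <;> simp [Wmul, h]
  · rintro (_ | a)
    · rfl
    · simp only [Wbar]
      split_ifs with h <;> simp [Wmul, h]
  · rintro (_ | a)
    · rfl
    · simp only [Wbar]
      split_ifs with h <;> simp [Wmul, Wbar, h]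
  · rintro (_ | a)
    · rfl
    · simp only [Wbar]
      split_ifs with h <;> simp [Wmul, Wbar, h]
  · rintro q hq hqp (_ | a)
    · simp [mpow_none, Wbar]
    · rcases eq_or_ne a 0 with rfl | ha
      · simp [mpow_some, Wbar, mpow_none]
      · have hq0 : (q : ZMod p) ≠ 0 := by
          rw [Ne, ZMod.natCast_eq_zero_iff]
          intro hd
          exact hqp ((Nat.prime_dvd_prime_iff_eq hp hq).mp hd).symm
        have h1 : ((q - 1 : ℕ) : ZMod p) + 1 = (q : ZMod p) := by
          rw [Nat.cast_sub hq.one_le]; push_cast; ring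
        simp only [mpow_some, Wbar, h1]
        rw [if_neg (mul_ne_zero hq0 ha)]
        rw [if_neg ha, mpow_none]
  · intro h
    have := h (some 1)
    have h1 : ((p - 1 : ℕ) : ZMod p) + 1 = 0 := by
      rw [Nat.cast_sub hp.one_le]; push_cast; simp [ZMod.natCast_self]
    rw [mpow_some, h1] at this
    simp [Wbar, mpow_none] at this
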